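/- Let 0 < λ < 1, ν = 1 − λ, 0 < δ < 1, and k a nonnegative integer. Define z*(k,δ,λ) as the smallest integer z ≥ k with B_{z,k}(ν) ≤ δ. Then z*(k,δ,λ) ≤ k/ν + √(2ν k ln(1/δ))/(2ν²) + ln(1/δ)/(2ν²) + 1. -/

import Mathlib

/-- Binomial cumulative distribution function B_{z,k}(p). -/
noncomputable def binCDF (z k : ℕ) (p : ℝ) : ℝ :=
  ∑ j ∈ Finset.range (k + 1), (z.choose j : ℝ) * p ^ j * (1 - p) ^ (z - j)

/-- z*(k,δ,λ): the smallest integer z ≥ k with B_{z,k}(1-λ) ≤ δ. -/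
noncomputable def zStar (k : ℕ) (δ lam : ℝ) : ℕ :=
  sInf {z : ℕ | k ≤ z ∧ binCDF z k (1 - lam) ≤ δ}

/-- Hoeffding's lemma for a Bernoulli mgf (case s ≤ 0). -/
lemma bern_mgf (p s : ℝ) (hp : 0 < p) (hp1 : p < 1) (hs : s ≤ 0) :
    1 - p + p * Real.exp s ≤ Real.exp (p * s + s ^ 2 / 8) := by
  set u : ℝ → ℝ := fun x => 1 - p + p * Real.exp x with hu_def
  have hu_pos : ∀ x, 0 < u x := by
    intro x
    have := Real.exp_pos x
    have : 0 < p * Real.exp x := by positivity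
    simp only [hu_def]
    nlinarith
  set D : ℝ → ℝ := fun x => p + x / 4 - p * Real.exp x / u x with hD_def
  set F : ℝ → ℝ := fun x => p * x + x ^ 2 / 8 - Real.log (u x) with hF_def
  have hu_deriv : ∀ x, HasDerivAt u (p * Real.exp x) x := by
    intro x
    exact ((Real.hasDerivAt_exp x).const_mul p).const_add (1 - p)
  have hF_deriv : ∀ x, HasDerivAt F (D x) x := by
    intro x
    have hlog : HasDerivAt (fun y => Real.log (u y)) (p * Real.exp x / u x) x :=
      (hu_deriv x).log (hu_pos x).ne'
    have h1 : HasDerivAt (fun y : ℝ => p * y + y ^ 2 / 8) (p + x / 4) x := by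
      have := ((hasDerivAt_pow 2 x).div_const 8).const_add 0
      have h2 : HasDerivAt (fun y : ℝ => p * y) p x := by
        simpa using (hasDerivAt_id x).const_mul p
      have h3 : HasDerivAt (fun y : ℝ => y ^ 2 / 8) (x / 4) x := by
        have := (hasDerivAt_pow 2 x).div_const 8
        exact this.congr_deriv (by norm_num; ring)
      exact h2.add h3
    exact h1.sub hlog
  have hD_deriv : ∀ x, HasDerivAt D
      (1 / 4 - (p * Real.exp x * u x - p * Real.exp x * (p * Real.exp x)) / (u x) ^ 2) x := by
    intro x
    have hdiv : HasDerivAt (fun y => p * Real.exp y / u y)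
        ((p * Real.exp x * u x - p * Real.exp x * (p * Real.exp x)) / (u x) ^ 2) x :=
      ((Real.hasDerivAt_exp x).const_mul p).div (hu_deriv x) (hu_pos x).ne'
    have h1 : HasDerivAt (fun y : ℝ => p + y / 4) (1 / 4) x := by
      simpa using ((hasDerivAt_id x).div_const 4).const_add p
    exact h1.sub hdiv
  have hD'_nonneg : ∀ x,
      0 ≤ 1 / 4 - (p * Real.exp x * u x - p * Real.exp x * (p * Real.exp x)) / (u x) ^ 2 := by
    intro x
    rw [sub_nonneg, div_le_iff₀ (pow_pos (hu_pos x) 2)]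
    have hux : u x = 1 - p + p * Real.exp x := rfl
    have he := Real.exp_pos x
    nlinarith [sq_nonneg (1 - p - p * Real.exp x)]
  have hDmono : Monotone D :=
    monotone_of_deriv_nonneg (fun x => (hD_deriv x).differentiableAt)
      (fun x => by rw [(hD_deriv x).deriv]; exact hD'_nonneg x)
  have hD0 : D 0 = 0 := by
    simp only [hD_def, hu_def, Real.exp_zero, mul_one]
    field_simp
    ring
  have hDle : ∀ x ≤ (0:ℝ), D x ≤ 0 := fun x hx => hD0 ▸ hDmono hx
  have hFanti : AntitoneOn F (Set.Iic 0) := by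
    apply antitoneOn_of_deriv_nonpos (convex_Iic 0)
    · exact (Differentiable.continuous fun x => (hF_deriv x).differentiableAt).continuousOn
    · exact fun x _ => (hF_deriv x).differentiableAt.differentiableWithinAt
    · intro x hx
      rw [interior_Iic] at hx
      rw [(hF_deriv x).deriv]
      exact hDle x hx.le
  have hF0 : F 0 = 0 := by
    simp [hF_def, hu_def]
  have hFs : 0 ≤ F s := by
    have := hFanti (Set.mem_Iic.2 hs) (Set.mem_Iic.2 le_rfl) hs
    rw [hF0] at this
    exact this
  have hlog_le : Real.log (u s) ≤ p * s + s ^ 2 / 8 := by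
    simp only [hF_def] at hFs; linarith
  calc 1 - p + p * Real.exp s = u s := rfl
    _ = Real.exp (Real.log (u s)) := (Real.exp_log (hu_pos s)).symm
    _ ≤ Real.exp (p * s + s ^ 2 / 8) := Real.exp_le_exp.2 hlog_le


/-- Chernoff bound for the lower binomial tail. -/
lemma chernoff (z k : ℕ) (p t : ℝ) (hp0 : 0 ≤ p) (hp1 : p ≤ 1) (ht : 0 ≤ t) (hkz : k ≤ z) :
    binCDF z k p ≤ Real.exp (t * k) * (1 - p + p * Real.exp (-t)) ^ z := by
  have hterm : ∀ j ∈ Finset.range (k + 1),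
      (z.choose j : ℝ) * p ^ j * (1 - p) ^ (z - j)
        ≤ Real.exp (t * k) * ((p * Real.exp (-t)) ^ j * (1 - p) ^ (z - j) * (z.choose j : ℝ)) := by
    intro j hj
    have hjk : j ≤ k := Nat.lt_succ_iff.mp (Finset.mem_range.mp hj)
    have h1 : (1:ℝ) ≤ Real.exp (t * k) * Real.exp (-t) ^ j := by
      rw [← Real.exp_nat_mul, ← Real.exp_add]
      have : (0:ℝ) ≤ t * k + (j : ℝ) * (-t) := by
        have : (j:ℝ) ≤ (k:ℝ) := Nat.cast_le.2 hjk
        nlinarith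
      calc (1:ℝ) = Real.exp 0 := Real.exp_zero.symm
        _ ≤ _ := Real.exp_le_exp.2 this
    have h1p : (0:ℝ) ≤ 1 - p := by linarith
    have hnn : (0:ℝ) ≤ (z.choose j : ℝ) * p ^ j * (1 - p) ^ (z - j) :=
      mul_nonneg (mul_nonneg (by positivity) (pow_nonneg hp0 _)) (pow_nonneg h1p _)
    calc (z.choose j : ℝ) * p ^ j * (1 - p) ^ (z - j)
        = ((z.choose j : ℝ) * p ^ j * (1 - p) ^ (z - j)) * 1 := by ring
      _ ≤ ((z.choose j : ℝ) * p ^ j * (1 - p) ^ (z - j)) *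
            (Real.exp (t * k) * Real.exp (-t) ^ j) := by
          exact mul_le_mul_of_nonneg_left h1 hnn
      _ = Real.exp (t * k) * ((p * Real.exp (-t)) ^ j * (1 - p) ^ (z - j) * (z.choose j : ℝ)) := by
          rw [mul_pow]; ring
  have h2 : binCDF z k p ≤ Real.exp (t * k) *
      ∑ j ∈ Finset.range (k + 1), (p * Real.exp (-t)) ^ j * (1 - p) ^ (z - j) * (z.choose j : ℝ) := by
    rw [Finset.mul_sum]
    exact Finset.sum_le_sum hterm
  have h3 : ∑ j ∈ Finset.range (k + 1), (p * Real.exp (-t)) ^ j * (1 - p) ^ (z - j) * (z.choose j : ℝ)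
      ≤ ∑ j ∈ Finset.range (z + 1), (p * Real.exp (-t)) ^ j * (1 - p) ^ (z - j) * (z.choose j : ℝ) := by
    apply Finset.sum_le_sum_of_subset_of_nonneg
    · exact Finset.range_subset_range.2 (by omega)
    · intro j _ _
      have h1p : (0:ℝ) ≤ 1 - p := by linarith
      exact mul_nonneg (mul_nonneg (pow_nonneg (by positivity) _) (pow_nonneg h1p _)) (by positivity)
  have h4 : ∑ j ∈ Finset.range (z + 1), (p * Real.exp (-t)) ^ j * (1 - p) ^ (z - j) * (z.choose j : ℝ)
      = (p * Real.exp (-t) + (1 - p)) ^ z := (add_pow _ _ z).symm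
  have hE : (0:ℝ) ≤ Real.exp (t * k) := (Real.exp_pos _).le
  calc binCDF z k p ≤ _ := h2
    _ ≤ Real.exp (t * k) * (p * Real.exp (-t) + (1 - p)) ^ z := by
        rw [← h4]; exact mul_le_mul_of_nonneg_left h3 hE
    _ = Real.exp (t * k) * (1 - p + p * Real.exp (-t)) ^ z := by ring_nf

/-- Key algebraic inequality. -/
lemma key_ineq (ν L kk z : ℝ) (hν : 0 < ν) (hν1 : ν ≤ 1) (hL : 0 < L) (hk : 0 ≤ kk)
    (hz : kk / ν + (Real.sqrt (2 * ν * kk * L) + L) / (2 * ν ^ 2) ≤ z) :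
    kk ≤ z * ν ∧ z * L ≤ 2 * (z * ν - kk) ^ 2 := by
  set S := Real.sqrt (2 * ν * kk * L) with hS_def
  have hS0 : 0 ≤ S := Real.sqrt_nonneg _
  have hS2 : S ^ 2 = 2 * ν * kk * L := Real.sq_sqrt (by positivity)
  have hd : 2 * ν * kk + S + L ≤ 2 * ν ^ 2 * z := by
    have h := mul_le_mul_of_nonneg_left hz (by positivity : (0:ℝ) ≤ 2 * ν ^ 2)
    have e1 : 2 * ν ^ 2 * (kk / ν) = 2 * ν * kk := by field_simp
    have e2 : 2 * ν ^ 2 * ((S + L) / (2 * ν ^ 2)) = S + L := by field_simp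
    nlinarith [h]
  constructor
  · nlinarith
  · -- with u = 2ν²z, m = 2νkk need (u - m)^2 ≥ u * L * 2ν²  ... direct nlinarith
    nlinarith [sq_nonneg (2 * ν ^ 2 * z - 2 * ν * kk - S - L), mul_nonneg hS0 hL.le,
      mul_nonneg (sub_nonneg.2 hd) hL.le, mul_nonneg (sub_nonneg.2 hd) hS0, sq_nonneg ν,
      mul_pos hν (mul_pos hν hL)]



theorem stmt_6 (lam δ : ℝ) (k : ℕ) (hlam0 : 0 < lam) (hlam1 : lam < 1)
    (hδ0 : 0 < δ) (hδ1 : δ < 1) :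
    (zStar k δ lam : ℝ) ≤ (k : ℝ) / (1 - lam)
      + Real.sqrt (2 * (1 - lam) * k * Real.log (1 / δ)) / (2 * (1 - lam) ^ 2)
      + Real.log (1 / δ) / (2 * (1 - lam) ^ 2) + 1 := by
  set ν : ℝ := 1 - lam with hν_def
  have hν0 : 0 < ν := by rw [hν_def]; linarith
  have hν1 : ν < 1 := by rw [hν_def]; linarith
  set L : ℝ := Real.log (1 / δ) with hL_def
  have hL0 : 0 < L := by
    rw [hL_def, one_div, Real.log_inv]
    linarith [Real.log_neg hδ0 hδ1]
  set S : ℝ := Real.sqrt (2 * ν * k * L) with hS_def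
  have hS0 : 0 ≤ S := Real.sqrt_nonneg _
  set x : ℝ := (k : ℝ) / ν + (S + L) / (2 * ν ^ 2) with hx_def
  have hx0 : 0 < x := by
    have h1 : 0 < (S + L) / (2 * ν ^ 2) := by positivity
    have h2 : 0 ≤ (k : ℝ) / ν := by positivity
    rw [hx_def]; linarith
  set z : ℕ := ⌈x⌉₊ with hz_def
  have hxz : x ≤ (z : ℝ) := Nat.le_ceil x
  have hz0 : 0 < z := Nat.ceil_pos.2 hx0
  have hzR : (0 : ℝ) < (z : ℝ) := by exact_mod_cast hz0
  have hkz : k ≤ z := by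
    have h1 : (k : ℝ) ≤ (k : ℝ) / ν := by
      rw [le_div_iff₀ hν0]
      nlinarith [Nat.cast_nonneg (α := ℝ) k]
    have h2 : 0 ≤ (S + L) / (2 * ν ^ 2) := by positivity
    have h3 : (k : ℝ) ≤ (z : ℝ) := by rw [hx_def] at hxz; linarith
    exact_mod_cast h3
  obtain ⟨hA, hkey⟩ := key_ineq ν L (k : ℝ) (z : ℝ) hν0 hν1.le hL0 (Nat.cast_nonneg k) hxz
  set t : ℝ := 4 * ((z : ℝ) * ν - k) / (z : ℝ) with ht_def
  have ht0 : 0 ≤ t := by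
    rw [ht_def]
    exact div_nonneg (by linarith) hzR.le
  have hbase0 : 0 ≤ 1 - ν + ν * Real.exp (-t) := by
    have := Real.exp_pos (-t)
    nlinarith
  have hb : binCDF z k ν ≤ δ := by
    have hchern := chernoff z k ν t hν0.le hν1.le ht0 hkz
    have hhoeff := bern_mgf ν (-t) hν0 hν1 (neg_nonpos.2 ht0)
    have hpow : (1 - ν + ν * Real.exp (-t)) ^ z
        ≤ Real.exp ((z : ℝ) * (ν * (-t) + (-t) ^ 2 / 8)) := by
      rw [Real.exp_nat_mul]
      exact pow_le_pow_left₀ hbase0 hhoeff z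
    have hEnn : 0 ≤ Real.exp (t * k) := (Real.exp_pos _).le
    have hcomb : binCDF z k ν ≤ Real.exp (t * k + (z : ℝ) * (ν * (-t) + (-t) ^ 2 / 8)) := by
      rw [Real.exp_add]
      calc binCDF z k ν ≤ _ := hchern
        _ ≤ _ := mul_le_mul_of_nonneg_left hpow hEnn
    have hexp_eq : t * k + (z : ℝ) * (ν * (-t) + (-t) ^ 2 / 8)
        = -(2 * ((z : ℝ) * ν - k) ^ 2 / (z : ℝ)) := by
      rw [ht_def]
      field_simp
      ring
    have hfinal : -(2 * ((z : ℝ) * ν - k) ^ 2 / (z : ℝ)) ≤ -L := by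
      rw [neg_le_neg_iff, le_div_iff₀ hzR]
      linarith
    have hδeq : Real.exp (-L) = δ := by
      rw [hL_def, one_div, Real.log_inv, neg_neg, Real.exp_log hδ0]
    calc binCDF z k ν ≤ _ := hcomb
      _ = Real.exp (-(2 * ((z : ℝ) * ν - k) ^ 2 / (z : ℝ))) := by rw [hexp_eq]
      _ ≤ Real.exp (-L) := Real.exp_le_exp.2 hfinal
      _ = δ := hδeq
  have hzs : zStar k δ lam ≤ z := Nat.sInf_le ⟨hkz, by rw [← hν_def] at *; exact hb⟩
  have hceil : (z : ℝ) ≤ x + 1 := by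
    rw [hz_def]
    exact (Nat.ceil_lt_add_one hx0.le).le
  calc (zStar k δ lam : ℝ) ≤ (z : ℝ) := Nat.cast_le.2 hzs
    _ ≤ x + 1 := hceil
    _ = (k : ℝ) / ν + S / (2 * ν ^ 2) + L / (2 * ν ^ 2) + 1 := by rw [hx_def]; ring
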